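/- There exists a direct sequence of towers of groups (G_{ij}, p_{ij}, h_{ij}) in which every G_{ij} is a free group of finite rank (in particular finitely generated), such that, setting Γ_j = lim_i G_{ij} with the homomorphisms Γ_j → Γ_{j+1} induced by the horizontal maps: (i) for every j and every γ ∈ Γ_j there exists k ≥ j such that the composite homomorphism Γ_j → Γ_k sends γ to the identity (i.e., colim_j Γ_j is trivial); but (ii) for every j and every k ≥ j the composite homomorphism Γ_j → Γ_k is not trivial (its image is not the trivial subgroup). (Hence the hypothesis of commutativity cannot be dropped from the statement that a direct sequence of inverse limits of towers of finitely generated abelian groups with trivial colimit has eventually trivial bonding maps.) -/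

import Mathlib

/-- The composite homomorphism `G_{i,j} → G_{i,j+k}` of the horizontal maps of a
direct sequence of towers of groups (the identity when `k = 0`). -/
def hIterM (G : ℕ → ℕ → GrpCat) (h : ∀ i j, ↥(G i j) →* ↥(G i (j + 1)))
    (i j : ℕ) : ∀ k, ↥(G i j) →* ↥(G i (j + k))
  | 0 => MonoidHom.id _
  | k + 1 => (h i (j + k)).comp (hIterM G h i j k)

namespace Stmt14

abbrev Hg (t : ℕ) := FreeGroup (Fin (2 ^ t + 1))

lemma pow_pos' (t : ℕ) : 0 < 2 ^ t := Nat.pow_pos (by norm_num)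

lemma zpow_pos' (t : ℕ) : (0:ℤ) < 2 ^ t := by positivity

def Agen (t : ℕ) : Hg t := FreeGroup.of ⟨0, Nat.succ_pos _⟩

def Bidx (t : ℕ) (m : ℤ) : Fin (2 ^ t + 1) :=
  ⟨(m % (2 ^ t : ℤ)).toNat + 1, by
    have h1 : 0 ≤ m % (2 ^ t : ℤ) := Int.emod_nonneg m (by positivity)
    have h2 : m % (2 ^ t : ℤ) < ((2 ^ t : ℕ) : ℤ) := by
      have := Int.emod_lt_of_pos m (b := (2^t : ℤ)) (by positivity)
      simpa using this
    omega⟩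

def Bdef (t : ℕ) (m : ℤ) : Hg t :=
  Agen t ^ (m / (2 ^ t : ℤ)) * FreeGroup.of (Bidx t m) * Agen t ^ (-(m / (2 ^ t : ℤ)))

lemma Bdef_def (t : ℕ) (m : ℤ) : Bdef t m =
    Agen t ^ (m / (2 ^ t : ℤ)) * FreeGroup.of (Bidx t m) * Agen t ^ (-(m / (2 ^ t : ℤ))) := rfl

lemma Bidx_val (t : ℕ) (m : ℤ) : ((Bidx t m).val : ℤ) = m % (2^t : ℤ) + 1 := by
  have h1 : 0 ≤ m % (2 ^ t : ℤ) := Int.emod_nonneg m (by positivity)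
  simp [Bidx]
  omega

lemma Bdef_shift (t : ℕ) (q m : ℤ) :
    Bdef t (m + q * 2 ^ t) = Agen t ^ q * Bdef t m * Agen t ^ (-q) := by
  have hq : (m + q * 2 ^ t) / (2 ^ t : ℤ) = m / 2 ^ t + q :=
    Int.add_mul_ediv_right m q (by positivity)
  have hr : (m + q * 2 ^ t) % (2 ^ t : ℤ) = m % 2 ^ t := by
    simp [Int.add_mul_emod_self_left]
  have hidx : Bidx t (m + q * 2 ^ t) = Bidx t m := by
    unfold Bidx; congr 1; rw [hr]
  unfold Bdef
  rw [hq, hidx, zpow_add]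
  group

lemma Bdef_small (t : ℕ) (s : ℕ) (hs : s < 2 ^ t) :
    Bdef t (s : ℤ) = FreeGroup.of ⟨s + 1, by omega⟩ := by
  have hq : ((s:ℤ)) / (2 ^ t : ℤ) = 0 := by
    apply Int.ediv_eq_zero_of_lt (by positivity)
    exact_mod_cast hs
  have hr : ((s:ℤ)) % (2 ^ t : ℤ) = s := by
    apply Int.emod_eq_of_lt (by positivity)
    exact_mod_cast hs
  unfold Bdef
  rw [hq]
  have : Bidx t s = ⟨s + 1, by omega⟩ := by
    unfold Bidx
    congr 1
    omega
  simp [this]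

lemma divmod_unique {a b r q : ℤ} (h : 0 < b) (h1 : r + b * q = a) (h2 : 0 ≤ r)
    (h3 : r < b) : a / b = q ∧ a % b = r :=
  (Int.ediv_emod_unique h).mpr ⟨h1, h2, h3⟩

lemma pow_succ' (t : ℕ) : 2 ^ (t+1) = 2 ^ t + 2 ^ t := by rw [pow_succ]; ring

lemma Bdef_mid (t : ℕ) (s : ℕ) (h1 : 2 ^ t ≤ s) (h2 : s < 2 ^ (t+1)) :
    Bdef t (s : ℤ) = Agen t * FreeGroup.of (⟨s - 2^t + 1, by
      have := pow_succ' t; omega⟩ : Fin (2^t+1)) * (Agen t)⁻¹ := by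
  have hps := pow_succ' t
  have hdm : ((s:ℤ)) / (2 ^ t : ℤ) = 1 ∧ ((s:ℤ)) % (2 ^ t : ℤ) = (s:ℤ) - 2^t := by
    apply divmod_unique (by positivity)
    · ring
    · have : ((2:ℤ))^t ≤ (s:ℤ) := by exact_mod_cast h1
      omega
    · have : (s:ℤ) < ((2:ℤ))^t + 2^t := by
        have h2' : (s:ℤ) < ((2^(t+1) : ℕ) : ℤ) := by exact_mod_cast h2
        push_cast at h2' ⊢
        omega
      omega
  have hidx : Bidx t (s:ℤ) = ⟨s - 2^t + 1, by omega⟩ := by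
    unfold Bidx
    congr 1
    rw [hdm.2]
    have h1' : ((2:ℤ))^t ≤ (s:ℤ) := by exact_mod_cast h1
    have e : ((2:ℤ))^t = ((2^t : ℕ) : ℤ) := by push_cast; ring
    omega
  unfold Bdef
  rw [hdm.1, hidx]
  simp [zpow_one]

/-! ### the vertical and horizontal one-step maps between abstract levels -/

def iotaFun (t : ℕ) (x : Fin (2 ^ (t+1) + 1)) : Hg t :=
  if x.val = 0 then Agen t * Agen t else Bdef t ((x.val - 1 : ℕ) : ℤ)

def iota (t : ℕ) : Hg (t+1) →* Hg t := FreeGroup.lift (iotaFun t)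

def lamFun (c : ℤ) (t : ℕ) (x : Fin (2 ^ (t+1) + 1)) : Hg t :=
  if x.val = 0 then Agen t
  else if (x.val - 1) % 2 = 1 then Bdef t (((x.val - 1) / 2 : ℕ) + c) else 1

def lam (c : ℤ) (t : ℕ) : Hg (t+1) →* Hg t := FreeGroup.lift (lamFun c t)

lemma iota_of (t : ℕ) (x) : iota t (FreeGroup.of x) = iotaFun t x := FreeGroup.lift_apply_of

lemma lam_of (c t x) : lam c t (FreeGroup.of x) = lamFun c t x := FreeGroup.lift_apply_of

lemma iota_A (t : ℕ) : iota t (Agen (t+1)) = Agen t * Agen t := by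
  rw [Agen, iota_of]; rfl

lemma lam_A (c : ℤ) (t : ℕ) : lam c t (Agen (t+1)) = Agen t := by
  rw [Agen, lam_of]; rfl

lemma emod_toNat (t m) : (((m % ((2:ℤ) ^ t)).toNat) : ℤ) = m % (2^t : ℤ) :=
  Int.toNat_of_nonneg (Int.emod_nonneg m (by positivity))

lemma emod_toNat_lt (t : ℕ) (m : ℤ) : (m % ((2:ℤ) ^ t)).toNat < 2 ^ t := by
  have := Int.emod_lt_of_pos m (b := (2^t : ℤ)) (by positivity)
  have h0 : ((2:ℤ))^t = ((2^t : ℕ) : ℤ) := by push_cast; ring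
  omega

lemma Bidx_val' (t : ℕ) (m : ℤ) : (Bidx t m).val = (m % ((2:ℤ) ^ t)).toNat + 1 := rfl

lemma int_decomp (t : ℕ) (m : ℤ) :
    m = ((m % ((2:ℤ)^(t+1))).toNat : ℤ) + (2 * (m / (2^(t+1) : ℤ))) * 2^t := by
  rw [emod_toNat]
  have h := Int.mul_ediv_add_emod m (2^(t+1) : ℤ)
  have hps : ((2:ℤ))^(t+1) = 2 * 2^t := by rw [pow_succ]; ring
  rw [hps] at h ⊢
  linarith

lemma iota_Bdef (t : ℕ) (m : ℤ) : iota t (Bdef (t+1) m) = Bdef t m := by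
  set q : ℤ := m / (2^(t+1) : ℤ) with hq
  set rn : ℕ := (m % ((2:ℤ) ^ (t+1))).toNat with hrn
  have hof : iota t (FreeGroup.of (Bidx (t+1) m)) = Bdef t (rn : ℤ) := by
    rw [iota_of]
    unfold iotaFun
    rw [Bidx_val' (t+1) m]
    rw [if_neg (Nat.succ_ne_zero _), Nat.add_sub_cancel]
  have key : iota t (Bdef (t+1) m)
      = (Agen t * Agen t) ^ q * Bdef t (rn : ℤ) * (Agen t * Agen t) ^ (-q) := by
    rw [Bdef_def (t+1) m, _root_.map_mul, _root_.map_mul, _root_.map_zpow, _root_.map_zpow,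
      iota_A, hof]
  rw [key]
  have hAA : Agen t * Agen t = Agen t ^ (2:ℤ) := by rw [zpow_two]
  rw [hAA, ← zpow_mul, ← zpow_mul]
  have hm : Bdef t m = Bdef t ((rn:ℤ) + (2*q) * 2^t) := by
    rw [← int_decomp]
  rw [show (2:ℤ) * -q = -(2*q) from by ring, hm, Bdef_shift]

lemma nat_parity_cast (s : ℕ) : ((s:ℤ) % 2 = 1) ↔ (s % 2 = 1) := by omega

lemma lam_Bdef (c : ℤ) (t : ℕ) (m : ℤ) :
    lam c t (Bdef (t+1) m) = if m % 2 = 1 then Bdef t (m / 2 + c) else 1 := by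
  set q : ℤ := m / (2^(t+1) : ℤ) with hq
  set rn : ℕ := (m % ((2:ℤ) ^ (t+1))).toNat with hrn
  have hrc : ((rn : ℤ)) = m % (2^(t+1) : ℤ) := emod_toNat _ _
  have hpar : (rn % 2 = 1) ↔ (m % 2 = 1) := by
    have h2 : m % ((2:ℤ)^(t+1)) % 2 = m % 2 :=
      Int.emod_emod_of_dvd m (Dvd.intro (2^t) (by rw [pow_succ]; ring))
    omega
  have hof : lam c t (FreeGroup.of (Bidx (t+1) m))
      = if rn % 2 = 1 then Bdef t ((rn / 2 : ℕ) + c) else 1 := by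
    rw [lam_of]
    unfold lamFun
    rw [Bidx_val' (t+1) m]
    rw [if_neg (Nat.succ_ne_zero _), Nat.add_sub_cancel]
  have key : lam c t (Bdef (t+1) m)
      = Agen t ^ q * (if rn % 2 = 1 then Bdef t ((rn / 2 : ℕ) + c) else 1) * Agen t ^ (-q) := by
    rw [Bdef_def (t+1) m, _root_.map_mul, _root_.map_mul, _root_.map_zpow, _root_.map_zpow,
      lam_A, hof]
  rw [key]
  by_cases hodd : rn % 2 = 1
  · rw [if_pos hodd, if_pos (hpar.mp hodd)]
    have hdecomp := int_decomp t m
    rw [← hq, ← hrn] at hdecomp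
    have harith : m / 2 + c = ((rn / 2 : ℕ) + c) + q * 2^t := by
      have h1 : m / 2 = ((rn:ℤ)) / 2 + q * 2^t := by
        rw [hdecomp]
        rw [show ((rn:ℤ)) + 2 * q * 2^t = (rn:ℤ) + (q * 2^t) * 2 from by ring]
        rw [Int.add_mul_ediv_right _ _ (by norm_num : (2:ℤ) ≠ 0)]
      have h2 : ((rn:ℤ)) / 2 = ((rn / 2 : ℕ) : ℤ) := by
        rw [Int.natCast_ediv]; norm_num
      rw [h1, h2]; ring
    rw [harith, Bdef_shift]
  · rw [if_neg hodd, if_neg (fun h => hodd (hpar.mpr h))]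
    group

/-- the fundamental commuting square of one-step maps -/
lemma lam_iota (c : ℤ) (t : ℕ) :
    (lam c t).comp (iota (t+1)) = (iota t).comp (lam c (t+1)) := by
  apply FreeGroup.ext_hom
  intro x
  simp only [MonoidHom.comp_apply]
  rcases Nat.eq_zero_or_pos x.val with h0 | hpos
  · have hx : x = ⟨0, Nat.succ_pos _⟩ := Fin.ext h0
    subst hx
    rw [show (FreeGroup.of (⟨0, Nat.succ_pos _⟩ : Fin (2^(t+1+1)+1))) = Agen (t+2) from rfl]
    rw [iota_A, _root_.map_mul, lam_A, lam_A, iota_A]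
  · set s : ℕ := x.val - 1 with hs
    set y : Fin (2^(t+1+1)+1) := ⟨s+1, by have := x.isLt; omega⟩ with hy
    have hyval : y.val = s + 1 := rfl
    have hx : FreeGroup.of x = FreeGroup.of y := by
      apply congrArg
      apply Fin.ext
      rw [hyval]
      omega
    have hio : iota (t+1) (FreeGroup.of x) = Bdef (t+1) (s : ℤ) := by
      rw [hx, iota_of]
      unfold iotaFun
      rw [hyval, if_neg (Nat.succ_ne_zero _), Nat.add_sub_cancel]
    have hlo : lam c (t+1) (FreeGroup.of x)
        = if s % 2 = 1 then Bdef (t+1) ((s / 2 : ℕ) + c) else 1 := by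
      rw [hx, lam_of]
      unfold lamFun
      rw [hyval, if_neg (Nat.succ_ne_zero _), Nat.add_sub_cancel]
    rw [hio, hlo, lam_Bdef]
    by_cases hodd : s % 2 = 1
    · rw [if_pos ((nat_parity_cast s).mpr hodd), if_pos hodd, iota_Bdef]
      congr 1
    · rw [if_neg (fun h => hodd ((nat_parity_cast s).mp h)), if_neg hodd, _root_.map_one]

/-! ### injectivity of `iota` via the Krasner–Kaloujnine embedding trick -/

abbrev PP (t : ℕ) := Hg (t+1) × Hg (t+1)

def swapA (t : ℕ) : MulAut (PP t) := MulEquiv.prodComm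

lemma swapA_apply (t : ℕ) (p : PP t) : swapA t p = (p.2, p.1) := rfl

lemma swapA_sq (t : ℕ) : swapA t * swapA t = 1 := by
  ext p <;> rfl

def phi (t : ℕ) : Multiplicative ℤ →* MulAut (PP t) := zpowersHom _ (swapA t)

lemma phi_ofAdd_one (t : ℕ) : phi t (Multiplicative.ofAdd 1) = swapA t := by
  rw [phi, zpowersHom_apply]
  simp

lemma phi_sq (t : ℕ) (z : Multiplicative ℤ) : phi t (z * z) = 1 := by
  rw [phi, zpowersHom_apply]
  show swapA t ^ (z.toAdd + z.toAdd) = 1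
  rw [← two_mul, zpow_mul]
  rw [show (swapA t ^ (2:ℤ)) = 1 from by rw [zpow_two, swapA_sq]]
  simp

abbrev KK (t : ℕ) := SemidirectProduct (PP t) (Multiplicative ℤ) (phi t)

def PsiFun (t : ℕ) (x : Fin (2^t+1)) : KK t :=
  if x.val = 0 then ⟨(1, Agen (t+1)), Multiplicative.ofAdd 1⟩
  else ⟨(FreeGroup.of ⟨x.val, by have h1 := x.isLt; have h2 := pow_succ' t; omega⟩,
         FreeGroup.of ⟨x.val + 2^t, by have h1 := x.isLt; have h2 := pow_succ' t; omega⟩), 1⟩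

def Psi (t : ℕ) : Hg t →* KK t := FreeGroup.lift (PsiFun t)

def dhatFun (t : ℕ) (x : Fin (2^(t+1)+1)) : (PP t) × Multiplicative ℤ :=
  if x.val = 0 then ((Agen (t+1), Agen (t+1)), Multiplicative.ofAdd 1)
  else if h : x.val ≤ 2^t then
    ((FreeGroup.of x, FreeGroup.of ⟨x.val + 2^t, by have h2 := pow_succ' t; omega⟩), 1)
  else ((FreeGroup.of x,
    Agen (t+1) * FreeGroup.of (⟨x.val - 2^t, by have h1 := x.isLt; omega⟩ : Fin (2^(t+1)+1))
      * (Agen (t+1))⁻¹), 1)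

def dhat (t : ℕ) : Hg (t+1) →* (PP t) × Multiplicative ℤ := FreeGroup.lift (dhatFun t)

def jmap (t : ℕ) : ((PP t) × Multiplicative ℤ) →* KK t where
  toFun g := ⟨g.1, g.2 * g.2⟩
  map_one' := by
    apply SemidirectProduct.ext <;> simp
  map_mul' a b := by
    apply SemidirectProduct.ext
    · show (a * b).1 = a.1 * (phi t) (a.2 * a.2) b.1
      rw [phi_sq]
      rfl
    · show (a.2 * b.2) * (a.2 * b.2) = (a.2 * a.2) * (b.2 * b.2)
      exact mul_mul_mul_comm a.2 b.2 a.2 b.2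

lemma jmap_left (t : ℕ) (g) : (jmap t g).left = g.1 := rfl

lemma jmap_right (t : ℕ) (g) : (jmap t g).right = g.2 * g.2 := rfl

lemma Psi_of (t x) : Psi t (FreeGroup.of x) = PsiFun t x := FreeGroup.lift_apply_of

lemma dhat_of (t x) : dhat t (FreeGroup.of x) = dhatFun t x := FreeGroup.lift_apply_of

lemma Psi_A (t : ℕ) : Psi t (Agen t) = ⟨(1, Agen (t+1)), Multiplicative.ofAdd 1⟩ := by
  rw [Agen, Psi_of]
  rfl

lemma of_congr {n : ℕ} {a b : Fin n} (h : a.val = b.val) :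
    (FreeGroup.of a : FreeGroup (Fin n)) = FreeGroup.of b := congrArg _ (Fin.ext h)

lemma PsiIota : ∀ t : ℕ, (Psi t).comp (iota t) = (jmap t).comp (dhat t) := by
  intro t
  apply FreeGroup.ext_hom
  intro x
  simp only [MonoidHom.comp_apply]
  rcases Nat.eq_zero_or_pos x.val with h0 | hpos
  · have hx : FreeGroup.of x = Agen (t+1) := by
      rw [Agen]; exact of_congr h0
    have hd : dhat t (FreeGroup.of x) = ((Agen (t+1), Agen (t+1)), Multiplicative.ofAdd 1) := by
      rw [dhat_of]; unfold dhatFun; rw [if_pos h0]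
    have hi : iota t (FreeGroup.of x) = Agen t * Agen t := by
      rw [iota_of]; unfold iotaFun; rw [if_pos h0]
    rw [hi, hd, _root_.map_mul, Psi_A]
    apply SemidirectProduct.ext
    · show ((1 : Hg (t+1)), Agen (t+1)) * (phi t (Multiplicative.ofAdd 1))
        ((1 : Hg (t+1)), Agen (t+1)) = (Agen (t+1), Agen (t+1))
      rw [phi_ofAdd_one, swapA_apply]
      exact Prod.ext (by simp) (by simp)
    · rfl
  · set s : ℕ := x.val - 1 with hs
    have hi : iota t (FreeGroup.of x) = Bdef t (s : ℤ) := by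
      rw [iota_of]; unfold iotaFun; rw [if_neg (by omega)]
    by_cases hle : x.val ≤ 2^t
    · have hslt : s < 2^t := by omega
      have hd : dhat t (FreeGroup.of x) =
          ((FreeGroup.of x, FreeGroup.of ⟨x.val + 2^t, by have h2 := pow_succ' t; omega⟩), 1) := by
        rw [dhat_of]; unfold dhatFun; rw [if_neg (by omega), dif_pos hle]
      rw [hi, hd, Bdef_small t s hslt, Psi_of]
      unfold PsiFun
      rw [if_neg (by simp)]
      apply SemidirectProduct.ext
      · simp only [_root_.map_one, MulAut.one_apply, mul_one]
        exact Prod.ext (of_congr (show s + 1 = x.val by omega))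
          (of_congr (show s + 1 + 2^t = x.val + 2^t by omega))
      · rfl
    · have hge : 2^t ≤ s := by omega
      have hlt2 : s < 2^(t+1) := by have := x.isLt; have := pow_succ' t; omega
      have hd : dhat t (FreeGroup.of x) = ((FreeGroup.of x,
          Agen (t+1) * FreeGroup.of (⟨x.val - 2^t, by have h1 := x.isLt; omega⟩ : Fin (2^(t+1)+1))
            * (Agen (t+1))⁻¹), 1) := by
        rw [dhat_of]; unfold dhatFun; rw [if_neg (by omega), dif_neg hle]
      apply mul_right_cancel (b := Psi t (Agen t))
      rw [← _root_.map_mul]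
      have hL : iota t (FreeGroup.of x) * Agen t
          = Agen t * FreeGroup.of (⟨s - 2^t + 1, by omega⟩ : Fin (2^t+1)) := by
        rw [hi, Bdef_mid t s hge hlt2, inv_mul_cancel_right]
      rw [hL, _root_.map_mul, Psi_A, Psi_of, hd]
      unfold PsiFun
      rw [if_neg (by simp)]
      have hone : ((1:Multiplicative ℤ) * 1 : Multiplicative ℤ) = 1 := mul_one 1
      apply SemidirectProduct.ext
      · simp only [SemidirectProduct.mul_left, jmap_left, jmap_right, phi_ofAdd_one, swapA_apply,
          hone, _root_.map_one, MulAut.one_apply, Prod.mk_mul_mk, one_mul, mul_one,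
          inv_mul_cancel_right]
        congr 1
        · exact of_congr (show s - 2^t + 1 + 2^t = x.val by omega)
        · exact congrArg (fun w => Agen (t+1) * w)
            (of_congr (show s - 2^t + 1 = x.val - 2^t by omega))
      · simp only [SemidirectProduct.mul_right, jmap_right, one_mul, mul_one]

lemma dhat_retract (t : ℕ) (z : Hg (t+1)) : ((dhat t z).1).1 = z := by
  have : ((MonoidHom.fst (Hg (t+1)) (Hg (t+1))).comp
      ((MonoidHom.fst (PP t) (Multiplicative ℤ)).comp (dhat t))) = MonoidHom.id _ := by
    apply FreeGroup.ext_hom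
    intro x
    simp only [MonoidHom.comp_apply, MonoidHom.id_apply, MonoidHom.coe_fst]
    rw [dhat_of]
    unfold dhatFun
    rcases Nat.eq_zero_or_pos x.val with h0 | hpos
    · rw [if_pos h0]
      show Agen (t+1) = FreeGroup.of x
      rw [Agen]
      exact congrArg _ (Fin.ext h0.symm)
    · rw [if_neg (by omega)]
      by_cases hle : x.val ≤ 2^t
      · rw [dif_pos hle]
      · rw [dif_neg hle]
  exact DFunLike.congr_fun this z

lemma iota_inj (t : ℕ) : Function.Injective (iota t) := by
  intro a b hab
  have h1 : (jmap t).comp (dhat t) a = (jmap t).comp (dhat t) b := by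
    rw [← PsiIota t]
    simp only [MonoidHom.comp_apply]
    rw [hab]
  have h2 : ((dhat t a).1).1 = ((dhat t b).1).1 := by
    have := congrArg (fun w => (SemidirectProduct.left w).1) h1
    simpa [jmap_left] using this
  rw [dhat_retract, dhat_retract] at h2
  exact h2

/-! ### the global doubly-indexed system -/

def recast {a b : ℕ} (h : a = b) : FreeGroup (Fin a) →* FreeGroup (Fin b) :=
  FreeGroup.lift (fun x => FreeGroup.of (Fin.cast h x))

lemma recast_of {a b : ℕ} (h : a = b) (x) :
    recast h (FreeGroup.of x) = FreeGroup.of (Fin.cast h x) := FreeGroup.lift_apply_of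

lemma recast_self {a : ℕ} (h : a = a) (x : FreeGroup (Fin a)) : recast h x = x := by
  have he : recast h = MonoidHom.id _ := by
    apply FreeGroup.ext_hom
    intro y
    rw [recast_of]
    rfl
  rw [he]
  rfl

lemma recast_Bdef {u v : ℕ} (e : u = v) (h : 2^u+1 = 2^v+1) (m : ℤ) :
    recast h (Bdef u m) = Bdef v m := by
  subst e
  rw [recast_self]

abbrev GG (i j : ℕ) : GrpCat := GrpCat.of (FreeGroup (Fin (2^(i-j) + 1)))

def pcore (i j : ℕ) (h : j ≤ i) : FreeGroup (Fin (2^(i+1-j)+1)) →* FreeGroup (Fin (2^(i-j)+1)) :=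
  (iota (i-j)).comp (recast (congrArg (fun n => 2^n + 1) (by omega : i+1-j = (i-j)+1)))

def hcore (i j : ℕ) (h : j+1 ≤ i) :
    FreeGroup (Fin (2^(i-j)+1)) →* FreeGroup (Fin (2^(i-(j+1))+1)) :=
  (lam ((j % 2 : ℕ) : ℤ) (i-(j+1))).comp
    (recast (congrArg (fun n => 2^n + 1) (by omega : i-j = (i-(j+1))+1)))

def pmap (i j : ℕ) : ↥(GG (i+1) j) →* ↥(GG i j) :=
  if h : j ≤ i then pcore i j h else 1

def hmap (i j : ℕ) : ↥(GG i j) →* ↥(GG i (j+1)) :=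
  if h : j + 1 ≤ i then hcore i j h else 1

lemma pmap_triv (i j : ℕ) (h : ¬ j ≤ i) (x) : pmap i j x = 1 := by
  unfold pmap
  rw [dif_neg h]
  rfl

lemma hmap_triv (i j : ℕ) (h : ¬ j+1 ≤ i) (x) : hmap i j x = 1 := by
  unfold hmap
  rw [dif_neg h]
  rfl

lemma pmap_eval (i j : ℕ) (h : j ≤ i) (x) : pmap i j x = pcore i j h x := by
  unfold pmap
  rw [dif_pos h]

lemma hmap_eval (i j : ℕ) (h : j+1 ≤ i) (x) : hmap i j x = hcore i j h x := by
  unfold hmap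
  rw [dif_pos h]

lemma pcore_Bdef (i j : ℕ) (h : j ≤ i) (m : ℤ) :
    pcore i j h (Bdef (i+1-j) m) = Bdef (i-j) m := by
  unfold pcore
  rw [MonoidHom.comp_apply, recast_Bdef (show i+1-j = (i-j)+1 by omega), iota_Bdef]

lemma hcore_Bdef (i j : ℕ) (h : j+1 ≤ i) (m : ℤ) :
    hcore i j h (Bdef (i-j) m) =
      if m % 2 = 1 then Bdef (i-(j+1)) (m / 2 + ((j % 2 : ℕ) : ℤ)) else 1 := by
  unfold hcore
  rw [MonoidHom.comp_apply, recast_Bdef (show i-j = (i-(j+1))+1 by omega), lam_Bdef]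

lemma pmap_Bdef (i j : ℕ) (h : j ≤ i) (m : ℤ) :
    pmap i j (Bdef (i+1-j) m) = Bdef (i-j) m := by
  rw [pmap_eval i j h, pcore_Bdef i j h]

lemma hmap_Bdef (i j : ℕ) (h : j+1 ≤ i) (m : ℤ) :
    hmap i j (Bdef (i-j) m) =
      if m % 2 = 1 then Bdef (i-(j+1)) (m / 2 + ((j % 2 : ℕ) : ℤ)) else 1 := by
  rw [hmap_eval i j h, hcore_Bdef i j h]

lemma pcore_of (i j : ℕ) (h : j ≤ i) (x : Fin (2^(i+1-j)+1)) :
    pcore i j h (FreeGroup.of x) =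
      if x.val = 0 then Agen (i-j) * Agen (i-j) else Bdef (i-j) ((x.val - 1 : ℕ) : ℤ) := by
  unfold pcore
  rw [MonoidHom.comp_apply, recast_of, iota_of]
  unfold iotaFun
  rw [Fin.coe_cast]

lemma hcore_of (i j : ℕ) (h : j+1 ≤ i) (x : Fin (2^(i-j)+1)) :
    hcore i j h (FreeGroup.of x) =
      if x.val = 0 then Agen (i-(j+1))
      else if (x.val - 1) % 2 = 1 then
        Bdef (i-(j+1)) (((x.val - 1) / 2 : ℕ) + ((j % 2 : ℕ) : ℤ)) else 1 := by
  unfold hcore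
  rw [MonoidHom.comp_apply, recast_of, lam_of]
  unfold lamFun
  rw [Fin.coe_cast]

/-- condition (i): the squares commute -/
lemma square (i j : ℕ) (g : ↥(GG (i+1) j)) :
    hmap i j (pmap i j g) = pmap i (j+1) (hmap (i+1) j g) := by
  by_cases h1 : j + 1 ≤ i
  · have keyhom : MonoidHom.comp (hcore i j h1) (pcore i j (Nat.le_of_succ_le h1)) =
      MonoidHom.comp (pcore i (j+1) h1) (hcore (i+1) j (Nat.succ_le_succ (Nat.le_of_succ_le h1))) := by
      apply FreeGroup.ext_hom
      intro x
      simp only [MonoidHom.comp_apply]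
      rcases Nat.eq_zero_or_pos x.val with h0 | hpos
      · have hx : FreeGroup.of x = Agen (i+1-j) := by
          rw [Agen]; exact of_congr h0
        rw [hx, show Agen (i+1-j) = FreeGroup.of ⟨0, Nat.succ_pos _⟩ from rfl]
        rw [pcore_of i j (by omega), hcore_of (i+1) j (by omega)]
        rw [if_pos rfl, if_pos rfl]
        rw [_root_.map_mul]
        rw [show Agen (i-j) = FreeGroup.of ⟨0, Nat.succ_pos _⟩ from rfl,
          hcore_of i j h1, if_pos rfl]
        rw [show Agen ((i+1)-(j+1)) = FreeGroup.of ⟨0, Nat.succ_pos _⟩ from rfl,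
          pcore_of i (j+1) h1, if_pos rfl]
      · set s : ℕ := x.val - 1 with hs
        set y : Fin (2^(i+1-j)+1) := ⟨s+1, by have := x.isLt; omega⟩ with hy
        have hyval : y.val = s + 1 := rfl
        have hx : FreeGroup.of x = FreeGroup.of y := of_congr (by rw [hyval]; omega)
        rw [hx, pcore_of i j (by omega), hcore_of (i+1) j (by omega)]
        rw [hyval, if_neg (Nat.succ_ne_zero _), if_neg (Nat.succ_ne_zero _), Nat.add_sub_cancel]
        rw [hcore_Bdef i j h1]
        by_cases hodd : s % 2 = 1
        · rw [if_pos ((nat_parity_cast s).mpr hodd), if_pos hodd]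
          rw [pcore_Bdef i (j+1) h1]
          congr 1
        · rw [if_neg (fun hh => hodd ((nat_parity_cast s).mp hh)), if_neg hodd, _root_.map_one]
    rw [pmap_eval i j (by omega), hmap_eval i j h1, hmap_eval (i+1) j (by omega),
      pmap_eval i (j+1) h1]
    exact DFunLike.congr_fun keyhom g
  · rw [hmap_triv i j h1, pmap_triv i (j+1) h1]

/-! ### the alpha character and divisibility -/

def alphaHom (t : ℕ) : Hg t →* Multiplicative ℤ :=
  FreeGroup.lift (fun x => if x.val = 0 then Multiplicative.ofAdd 1 else 1)

lemma alphaHom_A (t : ℕ) : alphaHom t (Agen t) = Multiplicative.ofAdd 1 := by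
  rw [Agen, alphaHom, FreeGroup.lift_apply_of]
  simp

lemma alphaHom_Bdef (t : ℕ) (m : ℤ) : alphaHom t (Bdef t m) = 1 := by
  rw [Bdef_def, _root_.map_mul, _root_.map_mul, _root_.map_zpow, _root_.map_zpow, alphaHom_A]
  have h1 : alphaHom t (FreeGroup.of (Bidx t m)) = 1 := by
    rw [alphaHom, FreeGroup.lift_apply_of, if_neg (by rw [Bidx_val']; omega)]
  rw [h1]
  have h2 : ∀ a : Multiplicative ℤ, ∀ q : ℤ, a ^ q * 1 * a ^ (-q) = 1 := by
    intro a q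
    rw [mul_one, ← zpow_add]
    simp
  exact h2 _ _

lemma alpha_iota (t : ℕ) (x : Hg (t+1)) :
    alphaHom t (iota t x) = alphaHom (t+1) x * alphaHom (t+1) x := by
  have key : (alphaHom t).comp (iota t) = (alphaHom (t+1)) * (alphaHom (t+1)) := by
    apply FreeGroup.ext_hom
    intro y
    simp only [MonoidHom.comp_apply, MonoidHom.mul_apply]
    rw [iota_of]
    unfold iotaFun
    by_cases h0 : y.val = 0
    · rw [if_pos h0, _root_.map_mul]
      have hy : FreeGroup.of y = Agen (t+1) := by rw [Agen]; exact of_congr h0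
      rw [hy, alphaHom_A, alphaHom_A]
    · rw [if_neg h0, alphaHom_Bdef]
      have h1 : alphaHom (t+1) (FreeGroup.of y) = 1 := by
        rw [alphaHom, FreeGroup.lift_apply_of, if_neg h0]
      rw [h1, mul_one]
  have := DFunLike.congr_fun key x
  simpa using this

lemma alpha_recast {u v : ℕ} (e : u = v) (h : 2^u+1 = 2^v+1) (x : Hg u) :
    alphaHom v (recast h x) = alphaHom u x := by
  subst e
  rw [recast_self]

lemma alpha_pmap (i j : ℕ) (h : j ≤ i) (x : ↥(GG (i+1) j)) :
    alphaHom (i-j) (pmap i j x) = alphaHom (i+1-j) x * alphaHom (i+1-j) x := by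
  rw [pmap_eval i j h]
  unfold pcore
  rw [MonoidHom.comp_apply, alpha_iota, alpha_recast (show i+1-j = (i-j)+1 by omega)]

lemma thread_alpha_zero (j : ℕ) (g : ∀ i, ↥(GG i j)) (hg : ∀ i, pmap i j (g (i+1)) = g i) :
    (alphaHom (j-j) (g j)).toAdd = 0 := by
  set v : ℕ → ℤ := fun T => (alphaHom ((j+T)-j) (g (j+T))).toAdd with hv
  have hstep : ∀ T, v T = 2 * v (T+1) := by
    intro T
    have h1 := alpha_pmap (j+T) j (by omega) (g (j+T+1))
    rw [hg (j+T)] at h1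
    have h2 := congrArg Multiplicative.toAdd h1
    simp only [toAdd_mul] at h2
    show (alphaHom (j+T-j) (g (j+T))).toAdd = 2 * (alphaHom (j+T+1-j) (g (j+T+1))).toAdd
    rw [h2]
    ring
  have hpow : ∀ T, v 0 = 2^T * v T := by
    intro T
    induction T with
    | zero => simp
    | succ T ih =>
      rw [ih, hstep T]
      ring
  have hdvd : ∀ T : ℕ, (2^T : ℤ) ∣ v 0 := fun T => ⟨v T, hpow T⟩
  by_contra h0
  have h1 : (2:ℤ)^((v 0).natAbs) ≤ |v 0| :=
    Int.le_of_dvd (abs_pos.mpr h0) ((dvd_abs _ _).mpr (hdvd _))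
  have h2 : |v 0| = ((v 0).natAbs : ℤ) := Int.abs_eq_natAbs _
  have h3 : ((v 0).natAbs : ℤ) < 2^((v 0).natAbs) := by
    have := Nat.lt_two_pow_self (n := (v 0).natAbs)
    exact_mod_cast this
  omega

/-! ### decomposition into B-letters -/

def letter (t : ℕ) (p : ℤ × Bool) : Hg t := if p.2 then Bdef t p.1 else (Bdef t p.1)⁻¹

def lprod (t : ℕ) (L : List (ℤ × Bool)) : Hg t := (L.map (letter t)).prod

lemma lprod_nil (t : ℕ) : lprod t [] = 1 := rfl

lemma lprod_cons (t : ℕ) (p L) : lprod t (p :: L) = letter t p * lprod t L := by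
  unfold lprod
  rw [List.map_cons, List.prod_cons]

lemma lprod_append (t : ℕ) (L1 L2) : lprod t (L1 ++ L2) = lprod t L1 * lprod t L2 := by
  unfold lprod
  rw [List.map_append, List.prod_append]

lemma conj_letter (t : ℕ) (e : ℤ) (p : ℤ × Bool) :
    Agen t ^ e * letter t p * Agen t ^ (-e) = letter t (p.1 + e * 2^t, p.2) := by
  unfold letter
  by_cases hb : p.2
  · rw [if_pos hb, if_pos hb, Bdef_shift]
  · rw [if_neg hb, if_neg hb, Bdef_shift]
    group

lemma conj_lprod (t : ℕ) (e : ℤ) (L : List (ℤ × Bool)) :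
    Agen t ^ e * lprod t L * Agen t ^ (-e)
      = lprod t (L.map (fun p => (p.1 + e * 2^t, p.2))) := by
  induction L with
  | nil =>
    rw [lprod_nil, List.map_nil, lprod_nil, mul_one, ← zpow_add]
    simp
  | cons p L ih =>
    rw [lprod_cons, List.map_cons, lprod_cons, ← conj_letter t e p, ← ih]
    group

lemma decomp (t : ℕ) (x : Hg t) : ∃ L : List (ℤ × Bool),
    x = lprod t L * Agen t ^ (alphaHom t x).toAdd := by
  induction x using FreeGroup.induction_on with
  | C1 =>
    refine ⟨[], ?_⟩
    simp [lprod_nil]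
  | of y =>
    show ∃ L, FreeGroup.of y = lprod t L * Agen t ^ (alphaHom t (FreeGroup.of y)).toAdd
    by_cases h0 : y.val = 0
    · refine ⟨[], ?_⟩
      have hy : FreeGroup.of y = Agen t := by rw [Agen]; exact of_congr h0
      rw [hy, alphaHom_A, lprod_nil, one_mul]
      rfl
    · refine ⟨[(((y.val - 1 : ℕ) : ℤ), true)], ?_⟩
      have h1 : alphaHom t (FreeGroup.of y) = 1 := by
        rw [alphaHom, FreeGroup.lift_apply_of, if_neg h0]
      rw [h1]
      have h2 : FreeGroup.of y = Bdef t ((y.val - 1 : ℕ) : ℤ) := by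
        rw [Bdef_small t (y.val - 1) (by have := y.isLt; omega)]
        exact (of_congr (show y.val - 1 + 1 = y.val by omega)).symm
      rw [h2, lprod_cons, lprod_nil]
      simp [letter]
  | inv_of y hy =>
    clear hy
    show ∃ L, (FreeGroup.of y)⁻¹ = lprod t L * Agen t ^ (alphaHom t (FreeGroup.of y)⁻¹).toAdd
    by_cases h0 : y.val = 0
    · refine ⟨[], ?_⟩
      have hy2 : FreeGroup.of y = Agen t := by rw [Agen]; exact of_congr h0
      rw [hy2, _root_.map_inv, alphaHom_A, lprod_nil, one_mul]
      simp
    · refine ⟨[(((y.val - 1 : ℕ) : ℤ), false)], ?_⟩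
      have h1 : alphaHom t ((FreeGroup.of y)⁻¹) = 1 := by
        rw [_root_.map_inv, alphaHom, FreeGroup.lift_apply_of, if_neg h0]
        rfl
      rw [h1]
      have h2 : FreeGroup.of y = Bdef t ((y.val - 1 : ℕ) : ℤ) := by
        rw [Bdef_small t (y.val - 1) (by have := y.isLt; omega)]
        exact (of_congr (show y.val - 1 + 1 = y.val by omega)).symm
      rw [h2, lprod_cons, lprod_nil]
      simp [letter]
  | mul a b iha ihb =>
    obtain ⟨La, hLa⟩ := iha
    obtain ⟨Lb, hLb⟩ := ihb
    set ea : ℤ := (alphaHom t a).toAdd with hea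
    set eb : ℤ := (alphaHom t b).toAdd with heb
    refine ⟨La ++ (Lb.map (fun p => (p.1 + ea * 2^t, p.2))), ?_⟩
    have hab : (alphaHom t (a*b)).toAdd = ea + eb := by
      rw [_root_.map_mul]
      simp [hea, heb]
    rw [hab, lprod_append, ← conj_lprod]
    calc a * b = (lprod t La * Agen t ^ ea) * (lprod t Lb * Agen t ^ eb) := by
          rw [← hLa, ← hLb]
      _ = lprod t La * (Agen t ^ ea * lprod t Lb * Agen t ^ (-ea)) * Agen t ^ (ea + eb) := by
          rw [zpow_add]
          group

/-! ### thread classification -/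

def BBprod (i j : ℕ) (L : List (ℤ × Bool)) : ↥(GG i j) := lprod (i-j) L

lemma pcore_letter (i j : ℕ) (h : j ≤ i) (p : ℤ × Bool) :
    pcore i j h (letter (i+1-j) p) = letter (i-j) p := by
  unfold letter
  by_cases hb : p.2
  · rw [if_pos hb, if_pos hb, pcore_Bdef i j h]
  · rw [if_neg hb, if_neg hb, _root_.map_inv, pcore_Bdef i j h]

lemma pmap_BBprod (i j : ℕ) (h : j ≤ i) (L : List (ℤ × Bool)) :
    pmap i j (BBprod (i+1) j L) = BBprod i j L := by
  rw [pmap_eval i j h]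
  unfold BBprod
  induction L with
  | nil =>
    rw [lprod_nil, lprod_nil, _root_.map_one]
  | cons p L ih =>
    rw [lprod_cons, lprod_cons, _root_.map_mul, ih]
    congr 1
    exact pcore_letter i j h p
  
lemma recast_inj {a b : ℕ} (h : a = b) : Function.Injective (recast h) := by
  subst h
  intro x y hxy
  rwa [recast_self, recast_self] at hxy

lemma pcore_inj (i j : ℕ) (h : j ≤ i) : Function.Injective (pcore i j h) := by
  unfold pcore
  intro x y hxy
  simp only [MonoidHom.comp_apply] at hxy
  exact recast_inj _ (iota_inj _ hxy)

lemma thread_classify (j : ℕ) (g : ∀ i, ↥(GG i j)) (hg : ∀ i, pmap i j (g (i + 1)) = g i) :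
    ∃ L : List (ℤ × Bool), ∀ T : ℕ, g (j + T) = BBprod (j + T) j L := by
  obtain ⟨L, hL⟩ := decomp (j-j) (g j)
  rw [thread_alpha_zero j g hg, zpow_zero, mul_one] at hL
  refine ⟨L, ?_⟩
  intro T
  induction T with
  | zero => exact hL
  | succ T ih =>
    have h1 : pmap (j+T) j (g (j+T+1)) = g (j+T) := hg (j+T)
    have h2 : pmap (j+T) j (BBprod (j+T+1) j L) = BBprod (j+T) j L :=
      pmap_BBprod (j+T) j (by omega) L
    rw [ih] at h1
    rw [pmap_eval (j+T) j (by omega)] at h1 h2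
    exact pcore_inj (j+T) j (by omega) (h1.trans h2.symm)

/-! ### the orbit dynamics -/

def OrbStep (c : ℤ) (m : ℤ) : Option ℤ := if m % 2 = 1 then some (m / 2 + c) else none

def Orb (j : ℕ) : ℕ → ℤ → Option ℤ
  | 0, m => some m
  | (k+1), m => (Orb j k m).bind (OrbStep (((j + k) % 2 : ℕ) : ℤ))

lemma Orb_succ (j k m) : Orb j (k+1) m = (Orb j k m).bind (OrbStep (((j + k) % 2 : ℕ) : ℤ)) := rfl

lemma Orb_none_mono (j : ℕ) (m : ℤ) {k k' : ℕ} (hk : k ≤ k') (h : Orb j k m = none) :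
    Orb j k' m = none := by
  induction k' with
  | zero =>
    have : k = 0 := by omega
    subst this
    exact h
  | succ k' ih =>
    rcases Nat.eq_or_lt_of_le hk with he | hlt
    · subst he; exact h
    · rw [Orb_succ, ih (by omega)]
      rfl

lemma Orb_shift (j : ℕ) (k : ℕ) (m : ℤ) (hodd : m % 2 = 1) :
    Orb j (k+1) m = Orb (j+1) k (m / 2 + ((j % 2 : ℕ) : ℤ)) := by
  induction k with
  | zero =>
    show (some m).bind (OrbStep (((j + 0) % 2 : ℕ) : ℤ)) = some _
    simp [OrbStep, hodd]
  | succ k ih =>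
    rw [Orb_succ, ih, Orb_succ]
    have he : j + (k+1) = (j+1) + k := by omega
    rw [he]

lemma Orb_kill (j : ℕ) (m : ℤ) (h : ¬ m % 2 = 1) : Orb j 1 m = none := by
  show (some m).bind (OrbStep _) = none
  simp [OrbStep, h]

lemma Orb_dies_aux : ∀ (n : ℕ) (m : ℤ), m.natAbs ≤ n → ∀ j, ∃ K, Orb j K m = none := by
  intro n
  induction n with
  | zero =>
    intro m hm j
    refine ⟨1, Orb_kill j m ?_⟩
    omega
  | succ n ih =>
    intro m hm j
    by_cases hodd : m % 2 = 1
    · have hjc : (j % 2 : ℕ) = 0 ∨ (j % 2 : ℕ) = 1 := by omega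
      by_cases hsmall : m = 1 ∨ m = -1
      · -- explicit small cases
        have hj1 : ((j+1) % 2 : ℕ) = 1 - (j % 2 : ℕ) := by omega
        have hj2 : ((j+2) % 2 : ℕ) = (j % 2 : ℕ) := by omega
        rcases hsmall with h1 | h1 <;> subst h1 <;> rcases hjc with hc | hc
        · -- m = 1, j even: 1 ↦ 0 dies
          refine ⟨2, ?_⟩
          rw [Orb_shift j 1 1 (by norm_num), hc]
          norm_num
          exact Orb_kill (j+1) 0 (by norm_num)
        · -- m = 1, j odd: 1 ↦ 1 ↦ 0 dies
          refine ⟨3, ?_⟩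
          rw [Orb_shift j 2 1 (by norm_num), hc]
          norm_num
          rw [Orb_shift (j+1) 1 1 (by norm_num), hj1, hc]
          norm_num
          exact Orb_kill (j+2) 0 (by norm_num)
        · -- m = -1, j even: -1 ↦ -1 ↦ 0 dies
          refine ⟨3, ?_⟩
          rw [Orb_shift j 2 (-1) (by decide), hc]
          norm_num
          rw [Orb_shift (j+1) 1 (-1) (by decide), hj1, hc]
          norm_num
          exact Orb_kill (j+2) 0 (by norm_num)
        · -- m = -1, j odd: -1 ↦ 0 dies
          refine ⟨2, ?_⟩
          rw [Orb_shift j 1 (-1) (by decide), hc]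
          norm_num
          exact Orb_kill (j+1) 0 (by norm_num)
      · have habs : (m / 2 + ((j % 2 : ℕ) : ℤ)).natAbs ≤ n := by
          rcases hjc with hc | hc <;> rw [hc] <;> omega
        obtain ⟨K, hK⟩ := ih (m / 2 + ((j % 2 : ℕ) : ℤ)) habs (j+1)
        exact ⟨K+1, by rw [Orb_shift j K m hodd]; exact hK⟩
    · exact ⟨1, Orb_kill j m hodd⟩

lemma Orb_dies (m : ℤ) (j : ℕ) : ∃ K, ∀ k, K ≤ k → Orb j k m = none := by
  obtain ⟨K, hK⟩ := Orb_dies_aux m.natAbs m le_rfl j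
  exact ⟨K, fun k hk => Orb_none_mono j m hk hK⟩

lemma Orb_surv (k : ℕ) : ∀ (j : ℕ) (v : ℤ), ∃ m, Orb j k m = some v := by
  induction k with
  | zero => exact fun j v => ⟨v, rfl⟩
  | succ k ih =>
    intro j v
    obtain ⟨u, hu⟩ := ih (j+1) v
    refine ⟨2 * (u - ((j % 2 : ℕ) : ℤ)) + 1, ?_⟩
    rw [Orb_shift j k _ (by omega)]
    have : (2 * (u - ((j % 2 : ℕ) : ℤ)) + 1) / 2 + ((j % 2 : ℕ) : ℤ) = u := by omega
    rw [this]
    exact hu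

/-! ### iterated horizontal maps -/

lemma hIterM_succ (i j k : ℕ) (x : ↥(GG i j)) :
    hIterM GG hmap i j (k+1) x = hmap i (j+k) (hIterM GG hmap i j k x) := rfl

lemma hIter_triv (i j k : ℕ) (hk : 1 ≤ k) (hik : i < j + k) (x : ↥(GG i j)) :
    hIterM GG hmap i j k x = 1 := by
  cases k with
  | zero => omega
  | succ k =>
    rw [hIterM_succ]
    exact hmap_triv i (j+k) (by omega) _

lemma hIter_Bdef (j k : ℕ) : ∀ (i : ℕ), j + k ≤ i → ∀ m : ℤ,
    hIterM GG hmap i j k (Bdef (i-j) m)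
      = (Orb j k m).elim 1 (fun v => Bdef (i-(j+k)) v) := by
  induction k with
  | zero => intro i hi m; rfl
  | succ k ih =>
    intro i hi m
    rw [hIterM_succ, ih i (by omega) m, Orb_succ]
    cases hOrb : Orb j k m with
    | none =>
      simp only [Option.elim, Option.bind, _root_.map_one]
    | some v =>
      simp only [Option.elim]
      have hB := hmap_Bdef i (j+k) (by omega) v
      rw [hB]
      have hb : (some v).bind (OrbStep (((j+k) % 2 : ℕ) : ℤ))
          = if v % 2 = 1 then some (v / 2 + (((j+k) % 2 : ℕ) : ℤ)) else none := rfl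
      rw [hb]
      by_cases hodd : v % 2 = 1
      · rw [if_pos hodd, if_pos hodd]
        rfl
      · rw [if_neg hodd, if_neg hodd]

lemma Bdef_ne_one (t : ℕ) (m : ℤ) : Bdef t m ≠ 1 := by
  intro h
  set chi : Hg t →* Multiplicative ℤ :=
    FreeGroup.lift (fun x : Fin (2^t+1) =>
      if x.val = 0 then (1 : Multiplicative ℤ) else Multiplicative.ofAdd 1) with hchi
  have h1 : chi (Bdef t m) = 1 := by rw [h, _root_.map_one]
  rw [Bdef_def, _root_.map_mul, _root_.map_mul, _root_.map_zpow, _root_.map_zpow] at h1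
  have hA : chi (Agen t) = 1 := by
    rw [Agen, hchi, FreeGroup.lift_apply_of]
    simp
  have hB : chi (FreeGroup.of (Bidx t m)) = Multiplicative.ofAdd 1 := by
    rw [hchi, FreeGroup.lift_apply_of, if_neg (by rw [Bidx_val']; omega)]
  rw [hA, hB] at h1
  simp at h1

lemma list_death (j : ℕ) (L : List (ℤ × Bool)) :
    ∃ K, ∀ k, K ≤ k → ∀ p ∈ L, Orb j k p.1 = none := by
  induction L with
  | nil => exact ⟨0, fun k _ p hp => absurd hp (List.not_mem_nil)⟩
  | cons q L ih =>
    obtain ⟨K1, h1⟩ := Orb_dies q.1 j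
    obtain ⟨K2, h2⟩ := ih
    refine ⟨max K1 K2, fun k hk p hp => ?_⟩
    rcases List.mem_cons.mp hp with rfl | hp
    · exact h1 k (le_trans (le_max_left _ _) hk)
    · exact h2 k (le_trans (le_max_right _ _) hk) p hp

lemma hIter_BBprod_dead (i j k : ℕ) (hik : j + k ≤ i) (L : List (ℤ × Bool))
    (hd : ∀ p ∈ L, Orb j k p.1 = none) :
    hIterM GG hmap i j k (BBprod i j L) = 1 := by
  induction L with
  | nil =>
    unfold BBprod
    rw [lprod_nil, _root_.map_one]
  | cons p L ih =>
    unfold BBprod at *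
    rw [lprod_cons, _root_.map_mul, ih (fun q hq => hd q (List.mem_cons_of_mem p hq)), mul_one]
    unfold letter
    by_cases hb : p.2
    · rw [if_pos hb, hIter_Bdef j k i hik p.1, hd p (List.mem_cons_self)]
      rfl
    · rw [if_neg hb, _root_.map_inv, hIter_Bdef j k i hik p.1, hd p (List.mem_cons_self)]
      simp

lemma third_GG (j : ℕ) (g : ∀ i, ↥(GG i j)) (hg : ∀ i, pmap i j (g (i + 1)) = g i) :
    ∃ k, ∀ i, hIterM GG hmap i j k (g i) = 1 := by
  obtain ⟨L, hL⟩ := thread_classify j g hg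
  obtain ⟨K0, hK0⟩ := list_death j L
  refine ⟨K0 + 1, ?_⟩
  intro i
  by_cases hik : i < j + (K0+1)
  · exact hIter_triv i j (K0+1) (by omega) hik _
  · obtain ⟨T, rfl⟩ : ∃ T, i = j + T := ⟨i - j, by omega⟩
    rw [hL T]
    exact hIter_BBprod_dead (j+T) j (K0+1) (by omega) L
      (fun p hp => hK0 (K0+1) (by omega) p hp)

lemma fourth_GG (j k : ℕ) : ∃ g : ∀ i, ↥(GG i j), (∀ i, pmap i j (g (i + 1)) = g i) ∧
    ¬(∀ i, hIterM GG hmap i j k (g i) = 1) := by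
  obtain ⟨m, hm⟩ := Orb_surv k j 0
  refine ⟨fun i => if h : j ≤ i then Bdef (i-j) m else 1, ?_, ?_⟩
  · intro i
    show pmap i j (if _h : j ≤ i+1 then Bdef (i+1-j) m else 1)
        = (if _h : j ≤ i then Bdef (i-j) m else 1)
    by_cases h : j ≤ i
    · rw [dif_pos (by omega : j ≤ i+1), dif_pos h]
      exact pmap_Bdef i j h m
    · rw [dif_neg h]
      exact pmap_triv i j h _
  · intro hall
    have h1 := hall (j+k)
    have h2 : hIterM GG hmap (j+k) j k (if _h : j ≤ j+k then Bdef ((j+k)-j) m else 1) = 1 := h1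
    rw [dif_pos (by omega : j ≤ j + k)] at h2
    rw [hIter_Bdef j k (j+k) le_rfl m, hm] at h2
    exact Bdef_ne_one _ _ h2

/-! ### lifting to an arbitrary universe -/

universe u

abbrev GGu : ℕ → ℕ → GrpCat.{u} := fun i j => GrpCat.of (ULift (FreeGroup (Fin (2^(i-j)+1))))

def upH (i j : ℕ) : ↥(GG i j) →* ↥(GGu.{u} i j) := MulEquiv.ulift.symm.toMonoidHom

def dnH (i j : ℕ) : ↥(GGu.{u} i j) →* ↥(GG i j) := MulEquiv.ulift.toMonoidHom

lemma up_dn (i j : ℕ) (x : ↥(GGu.{u} i j)) : upH i j (dnH i j x) = x := rfl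

lemma dn_up (i j : ℕ) (x : ↥(GG i j)) : dnH.{u} i j (upH i j x) = x := rfl

lemma up_one (i j : ℕ) : upH.{u} i j 1 = 1 := _root_.map_one _

lemma up_inj (i j : ℕ) {x y : ↥(GG i j)} (h : upH.{u} i j x = upH i j y) : x = y := by
  have := congrArg (dnH.{u} i j) h
  rwa [dn_up, dn_up] at this

def pmapu (i j : ℕ) : ↥(GGu.{u} (i+1) j) →* ↥(GGu.{u} i j) :=
  ((upH i j).comp (pmap i j)).comp (dnH (i+1) j)

def hmapu (i j : ℕ) : ↥(GGu.{u} i j) →* ↥(GGu.{u} i (j+1)) :=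
  ((upH i (j+1)).comp (hmap i j)).comp (dnH i j)

lemma pmapu_apply (i j : ℕ) (x) : pmapu.{u} i j x = upH i j (pmap i j (dnH (i+1) j x)) := rfl

lemma hmapu_apply (i j : ℕ) (x) : hmapu.{u} i j x = upH i (j+1) (hmap i j (dnH i j x)) := rfl

lemma hIterM_succ_apply (G : ℕ → ℕ → GrpCat.{u}) (h : ∀ i j, ↥(G i j) →* ↥(G i (j + 1)))
    (i j k : ℕ) (x : ↥(G i j)) :
    hIterM G h i j (k+1) x = h i (j+k) (hIterM G h i j k x) := rfl

lemma hIterM_u (i j : ℕ) : ∀ (k : ℕ) (x : ↥(GGu.{u} i j)),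
    hIterM GGu.{u} hmapu.{u} i j k x = upH i (j+k) (hIterM GG hmap i j k (dnH i j x)) := by
  intro k
  induction k with
  | zero =>
    intro x
    exact (up_dn i j x).symm
  | succ k ih =>
    intro x
    rw [hIterM_succ_apply, ih, hIterM_succ_apply, hmapu_apply, dn_up]
    rfl

lemma squareu (i j : ℕ) (g : ↥(GGu.{u} (i+1) j)) :
    hmapu i j (pmapu i j g) = pmapu i (j+1) (hmapu (i+1) j g) := by
  rw [pmapu_apply, hmapu_apply, dn_up, hmapu_apply, pmapu_apply, dn_up, square]

end Stmt14

/-- Example: there is a direct sequence of towers of groups, with every `G_{ij}` a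
free group of finite rank (in particular finitely generated), such that the colimit of
the inverse limits `Γ_j = lim_i G_{ij}` is trivial, yet no composite homomorphism
`Γ_j → Γ_k` (`k ≥ j`) is trivial.  Hence commutativity cannot be dropped from
Theorem A(a). -/
theorem stmt_14 :
    ∃ (G : ℕ → ℕ → GrpCat) (p : ∀ i j, ↥(G (i + 1) j) →* ↥(G i j))
      (h : ∀ i j, ↥(G i j) →* ↥(G i (j + 1))),
      (∀ i j (g : ↥(G (i + 1) j)), h i j (p i j g) = p i (j + 1) (h (i + 1) j g)) ∧
      (∀ i j, ∃ n : ℕ, Nonempty (↥(G i j) ≃* FreeGroup (Fin n))) ∧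
      -- the colimit of the `Γ_j = lim_i G_{ij}` is trivial
      (∀ j (g : ∀ i, ↥(G i j)), (∀ i, p i j (g (i + 1)) = g i) →
        ∃ k, ∀ i, hIterM G h i j k (g i) = 1) ∧
      -- but no composite homomorphism `Γ_j → Γ_k` is trivial
      (∀ j k, ∃ g : ∀ i, ↥(G i j), (∀ i, p i j (g (i + 1)) = g i) ∧
        ¬(∀ i, hIterM G h i j k (g i) = 1)) := by
  refine ⟨Stmt14.GGu, Stmt14.pmapu, Stmt14.hmapu, Stmt14.squareu, ?_, ?_, ?_⟩
  · intro i j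
    exact ⟨2^(i-j)+1, ⟨MulEquiv.ulift⟩⟩
  · intro j g hg
    have hg' : ∀ i, Stmt14.pmap i j (Stmt14.dnH (i+1) j (g (i+1))) = Stmt14.dnH i j (g i) := by
      intro i
      have := congrArg (Stmt14.dnH i j) (hg i)
      rwa [Stmt14.pmapu_apply, Stmt14.dn_up] at this
    obtain ⟨k, hk⟩ := Stmt14.third_GG j (fun i => Stmt14.dnH i j (g i)) hg'
    refine ⟨k, fun i => ?_⟩
    rw [Stmt14.hIterM_u, hk i, Stmt14.up_one]
  · intro j k
    obtain ⟨g, hg, hng⟩ := Stmt14.fourth_GG j k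
    refine ⟨fun i => Stmt14.upH i j (g i), ?_, ?_⟩
    · intro i
      rw [Stmt14.pmapu_apply, Stmt14.dn_up, hg i]
    · intro hall
      apply hng
      intro i
      have := hall i
      rw [Stmt14.hIterM_u, Stmt14.dn_up] at this
      have h2 := congrArg (Stmt14.dnH i (j+k)) this
      rwa [Stmt14.dn_up, _root_.map_one] at h2
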